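/- arXiv:2409.06588 — 2 statements merged into one kernel-verified Lean document; each statement's English description precedes it below -/
import Mathlib

section
/- In the double-estimator Obs_D(G), for every observation α ∈ H_a(L(G)), the reached state satisfies f_D(α) = { f(s) : s ∈ L(G), H_a(s) = α }, where f is the transition function of the knowledge recognizer T_o. -/
/-- The knowledge recognizer T_o, viewed as an automaton with partial
transition function over state space Q and event set Σ (its language
coincides with L(G)). -/
structure PDFA (Q E : Type*) where
  step : Q → E → Option Q
  init : Q

def PDFA.runFrom {Q E : Type*} (T : PDFA Q E) (q : Q) (s : List E) : Option Q :=
  s.foldl (fun oq e => oq.bind fun q' => T.step q' e) (some q)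

def PDFA.run {Q E : Type*} (T : PDFA Q E) (s : List E) : Option Q :=
  T.runFrom T.init s

def PDFA.lang {Q E : Type*} (T : PDFA Q E) : Set (List E) :=
  {s | (T.run s).isSome}

def obs {E O : Type*} (H : E → Option O) (s : List E) : List O := s.filterMap H

/-- Transition function of the double-estimator:
f_D(q_D, H_a(σ)) = {f(q, w) : q ∈ q_D, H_a(w) = H_a(σ)}. -/
def fD {Q E O : Type*} (T : PDFA Q E) (Ha : E → Option O)
    (qD : Set Q) (o : O) : Set Q :=
  {q' | ∃ q ∈ qD, ∃ w : List E, obs Ha w = [o] ∧ T.runFrom q w = some q'}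

/-- Initial state q_{0,D} = {f(w) : w ∈ Σ_ua*}. -/
def fD0 {Q E O : Type*} (T : PDFA Q E) (Ha : E → Option O) : Set Q :=
  {q | ∃ w : List E, obs Ha w = [] ∧ T.run w = some q}

/-- Extended transition function of the double-estimator on observations. -/
def fDrun {Q E O : Type*} (T : PDFA Q E) (Ha : E → Option O) (α : List O) : Set Q :=
  α.foldl (fD T Ha) (fD0 T Ha)

lemma foldl_none {Q E : Type*} (T : PDFA Q E) (w : List E) :
    w.foldl (fun oq e => oq.bind fun q' => T.step q' e) none = none := by
  induction w with
  | nil => rfl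
  | cons e t ih => simpa [List.foldl] using ih

lemma runFrom_append {Q E : Type*} (T : PDFA Q E) (q : Q) (s w : List E) :
    T.runFrom q (s ++ w) = (T.runFrom q s).bind (fun q' => T.runFrom q' w) := by
  unfold PDFA.runFrom
  rw [List.foldl_append]
  cases h : s.foldl (fun oq e => oq.bind fun q' => T.step q' e) (some q) with
  | none => simpa using foldl_none T w
  | some q' => rfl

lemma obs_split {E O : Type*} (Ha : E → Option O) :
    ∀ (s : List E) (α : List O) (o : O), obs Ha s = α ++ [o] →
      ∃ u v : List E, s = u ++ v ∧ obs Ha u = α ∧ obs Ha v = [o] := by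
  intro s
  induction s with
  | nil => intro α o h; simp [obs] at h
  | cons e t ih =>
    intro α o h
    cases he : Ha e with
    | none =>
      simp [obs, he] at h
      obtain ⟨u, v, rfl, hu, hv⟩ := ih α o h
      exact ⟨e :: u, v, rfl, by simpa [obs, he] using hu, hv⟩
    | some o' =>
      simp [obs, he] at h
      cases α with
      | nil =>
        simp at h
        exact ⟨[], e :: t, rfl, rfl, by simp [obs, he, h.1]; exact h.2⟩
      | cons a α' =>
        simp at h
        obtain ⟨u, v, rfl, hu, hv⟩ := ih α' o h.2
        exact ⟨e :: u, v, rfl, by simp [obs, he, h.1]; exact hu, hv⟩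

/-- For every observation α ∈ H_a(L(G)),
f_D(α) = {f(s) : s ∈ L(G), H_a(s) = α}. -/
theorem stmt_9 {Q E O : Type*} (T : PDFA Q E) (Ha : E → Option O) :
    ∀ α : List O, (∃ s ∈ T.lang, obs Ha s = α) →
      fDrun T Ha α = {q | ∃ s ∈ T.lang, obs Ha s = α ∧ T.run s = some q} := by
  intro α _
  have key : ∀ β : List O, fDrun T Ha β = {q | ∃ s : List E, obs Ha s = β ∧ T.run s = some q} := by
    intro β
    induction β using List.reverseRecOn with
    | nil =>
      ext q
      simp [fDrun, fD0]
    | append_singleton γ o ih =>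
      have hfold : fDrun T Ha (γ ++ [o]) = fD T Ha (fDrun T Ha γ) o := by
        simp [fDrun, List.foldl_append]
      rw [hfold, ih]
      ext q'
      constructor
      · rintro ⟨q, ⟨s, hs, hrs⟩, w, hw, hrw⟩
        refine ⟨s ++ w, ?_, ?_⟩
        · simp [obs, List.filterMap_append] at *
          rw [hs, hw]
        · rw [PDFA.run, runFrom_append, ← PDFA.run, hrs]
          exact hrw
      · rintro ⟨s, hs, hrs⟩
        obtain ⟨u, v, rfl, hu, hv⟩ := obs_split Ha s γ o hs
        rw [PDFA.run, runFrom_append, ← PDFA.run] at hrs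
        obtain ⟨q, hq, hq'⟩ := Option.bind_eq_some_iff.mp hrs
        exact ⟨q, ⟨u, hu, hq⟩, v, hv, hq'⟩
  rw [key α]
  ext q
  constructor
  · rintro ⟨s, hs, hrs⟩
    exact ⟨s, by simp [PDFA.lang, hrs], hs, hrs⟩
  · rintro ⟨s, _, hs, hrs⟩
    exact ⟨s, hs, hrs⟩
end

section
/- In the twin-estimator V of G, (i) every string s_V = (s₁, s₂) ∈ L(V) projects to a pair of strings s₁, s₂ ∈ L(G) with H_a(s₁) = H_a(s₂); and (ii) conversely, for any s₁, s₂ ∈ L(G) with H_a(s₁) = H_a(s₂), there exists an interleaving s_V ∈ L(V) whose projections are s₁ and s₂. -/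
/-- Step of one component, where `none` (= ε) means staying put. -/
def optStep {Q E : Type*} (T : PDFA Q E) (q : Q) (e : Option E) : Option Q :=
  e.elim (some q) (T.step q)

/-- Transition function of the twin-estimator:
f_V((q₁,q₂),(σ₁,σ₂)) = (f(q₁,σ₁), f(q₂,σ₂)). -/
def twinStep {Q E : Type*} (T : PDFA Q E) (q : Q × Q) (ev : Option E × Option E) :
    Option (Q × Q) :=
  (optStep T q.1 ev.1).bind fun q1' => (optStep T q.2 ev.2).map fun q2' => (q1', q2')

/-- Run of the twin-estimator from the initial state (q₀, q₀). -/
def twinRun {Q E : Type*} (T : PDFA Q E) (sV : List (Option E × Option E)) :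
    Option (Q × Q) :=
  sV.foldl (fun oq ev => oq.bind fun q => twinStep T q ev) (some (T.init, T.init))

/-- The event set Σ_V = Σ_V^a ∪ Σ_V^{ua} of the twin-estimator. -/
def twinEvents {E O : Type*} (Ha : E → Option O) : Set (Option E × Option E) :=
  {ev | (∃ σ1 σ2 : E, ev = (some σ1, some σ2) ∧ (Ha σ1).isSome ∧ Ha σ1 = Ha σ2) ∨
        (∃ σ : E, ev = (some σ, none) ∧ Ha σ = none) ∨
        (∃ σ : E, ev = (none, some σ) ∧ Ha σ = none)}

lemma foldl_bind_none {A B : Type*} (g : A → B → Option A) (l : List B) :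
    l.foldl (fun oq e => oq.bind fun q => g q e) none = none := by
  induction l with
  | nil => rfl
  | cons e t ih => simpa using ih

lemma runFrom_cons {Q E : Type*} (T : PDFA Q E) (q : Q) (e : E) (s : List E) :
    T.runFrom q (e :: s) = (T.step q e).bind fun q' => T.runFrom q' s := by
  cases h : T.step q e with
  | none => simp [PDFA.runFrom, h, foldl_bind_none]
  | some q' => simp [PDFA.runFrom, h]

lemma twinStep_nn {Q E : Type*} (T : PDFA Q E) (q1 q2 : Q) :
    twinStep T (q1, q2) (none, none) = some (q1, q2) := rfl

lemma twinStep_sn {Q E : Type*} (T : PDFA Q E) (q1 q2 : Q) (a : E) :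
    twinStep T (q1, q2) (some a, none) = (T.step q1 a).map fun q1' => (q1', q2) := by
  simp [twinStep, optStep, Option.map_eq_bind]

lemma twinStep_ns {Q E : Type*} (T : PDFA Q E) (q1 q2 : Q) (b : E) :
    twinStep T (q1, q2) (none, some b) = (T.step q2 b).map fun q2' => (q1, q2') := by
  simp [twinStep, optStep]

lemma twinStep_ss {Q E : Type*} (T : PDFA Q E) (q1 q2 : Q) (a b : E) :
    twinStep T (q1, q2) (some a, some b) =
      (T.step q1 a).bind fun q1' => (T.step q2 b).map fun q2' => (q1', q2') := by
  simp [twinStep, optStep]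

lemma twin_fold {Q E : Type*} (T : PDFA Q E) (sV : List (Option E × Option E)) :
    ∀ q1 q2 : Q,
      sV.foldl (fun oq ev => oq.bind fun q => twinStep T q ev) (some (q1, q2)) =
      (T.runFrom q1 (sV.filterMap Prod.fst)).bind fun p1 =>
        (T.runFrom q2 (sV.filterMap Prod.snd)).map fun p2 => (p1, p2) := by
  induction sV with
  | nil => intro q1 q2; simp [PDFA.runFrom]
  | cons ev t ih =>
    rintro q1 q2
    obtain ⟨e1, e2⟩ := ev
    rw [List.foldl_cons, Option.bind_some]
    cases e1 <;> cases e2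
    · simpa [List.filterMap_cons, twinStep_nn] using ih q1 q2
    · rename_i b
      rw [twinStep_ns]
      simp only [List.filterMap_cons, runFrom_cons]
      cases hb : T.step q2 b with
      | none => simp [foldl_bind_none]
      | some q2' => simpa using ih q1 q2'
    · rename_i a
      rw [twinStep_sn]
      simp only [List.filterMap_cons, runFrom_cons]
      cases ha : T.step q1 a with
      | none => simp [foldl_bind_none]
      | some q1' => simpa using ih q1' q2
    · rename_i a b
      rw [twinStep_ss]
      simp only [List.filterMap_cons, runFrom_cons]
      cases ha : T.step q1 a with
      | none => simp [foldl_bind_none]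
      | some q1' =>
        cases hb : T.step q2 b with
        | none => simp [foldl_bind_none]
        | some q2' => simpa using ih q1' q2'

lemma twinRun_eq {Q E : Type*} (T : PDFA Q E) (sV : List (Option E × Option E)) :
    twinRun T sV =
      (T.run (sV.filterMap Prod.fst)).bind fun p1 =>
        (T.run (sV.filterMap Prod.snd)).map fun p2 => (p1, p2) := by
  simpa [twinRun, PDFA.run] using twin_fold T sV T.init T.init

lemma obs_proj_eq {E O : Type*} (Ha : E → Option O) (sV : List (Option E × Option E))
    (h : ∀ ev ∈ sV, ev ∈ twinEvents Ha) :
    obs Ha (sV.filterMap Prod.fst) = obs Ha (sV.filterMap Prod.snd) := by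
  induction sV with
  | nil => rfl
  | cons ev t ih =>
    have hih := ih (fun e he => h e (List.mem_cons_of_mem _ he))
    rcases h ev List.mem_cons_self with ⟨σ1, σ2, rfl, hs, heq⟩ | ⟨σ, rfl, hσ⟩ | ⟨σ, rfl, hσ⟩
    · cases h1 : Ha σ1 with
      | none => rw [h1] at hs; simp at hs
      | some o =>
        have h2 : Ha σ2 = some o := heq ▸ h1
        simp only [obs, List.filterMap_cons, h1, h2] at hih ⊢
        rw [hih]
    · simp only [obs, List.filterMap_cons, hσ] at hih ⊢
      exact hih
    · simp only [obs, List.filterMap_cons, hσ] at hih ⊢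
      exact hih

lemma interleave {E O : Type*} (Ha : E → Option O) :
    ∀ s1 s2 : List E, obs Ha s1 = obs Ha s2 →
      ∃ sV : List (Option E × Option E),
        (∀ ev ∈ sV, ev ∈ twinEvents Ha) ∧
        sV.filterMap Prod.fst = s1 ∧ sV.filterMap Prod.snd = s2 := by
  intro s1
  induction s1 with
  | nil =>
    intro s2 h
    refine ⟨s2.map (fun e => (none, some e)), ?_, ?_, ?_⟩
    · intro ev hev
      simp only [List.mem_map] at hev
      obtain ⟨e, he, rfl⟩ := hev
      have hnil : List.filterMap Ha s2 = [] := by simpa [obs] using h.symm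
      exact Or.inr (Or.inr ⟨e, rfl, (List.filterMap_eq_nil_iff.mp hnil) e he⟩)
    · simp [List.filterMap_map, Function.comp_def]
    · simp [List.filterMap_map, Function.comp_def]
  | cons a t1 ih =>
    intro s2 h
    cases ha : Ha a with
    | none =>
      have h' : obs Ha t1 = obs Ha s2 := by simpa [obs, List.filterMap_cons, ha] using h
      obtain ⟨sV, hev, h1, h2⟩ := ih s2 h'
      refine ⟨(some a, none) :: sV, ?_, by simp [List.filterMap_cons, h1],
        by simp [List.filterMap_cons, h2]⟩
      intro ev hev'
      rcases List.mem_cons.mp hev' with rfl | hm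
      · exact Or.inr (Or.inl ⟨a, rfl, ha⟩)
      · exact hev _ hm
    | some o =>
      induction s2 with
      | nil => simp [obs, List.filterMap_cons, ha] at h
      | cons b t2 ih2 =>
        cases hb : Ha b with
        | none =>
          have h' : obs Ha (a :: t1) = obs Ha t2 := by
            simpa [obs, List.filterMap_cons, hb] using h
          obtain ⟨sV, hev, h1, h2⟩ := ih2 h'
          refine ⟨(none, some b) :: sV, ?_, by simp [List.filterMap_cons, h1],
            by simp [List.filterMap_cons, h2]⟩
          intro ev hev'
          rcases List.mem_cons.mp hev' with rfl | hm
          · exact Or.inr (Or.inr ⟨b, rfl, hb⟩)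
          · exact hev _ hm
        | some o' =>
          have hco : o = o' ∧ List.filterMap Ha t1 = List.filterMap Ha t2 := by
            have := h
            simp only [obs, List.filterMap_cons, ha, hb, List.cons.injEq] at this
            exact this
          obtain ⟨sV, hev, h1, h2⟩ := ih t2 hco.2
          refine ⟨(some a, some b) :: sV, ?_, by simp [List.filterMap_cons, h1],
            by simp [List.filterMap_cons, h2]⟩
          intro ev hev'
          rcases List.mem_cons.mp hev' with rfl | hm
          · exact Or.inl ⟨a, b, rfl, by simp [ha], by rw [ha, hb, hco.1]⟩
          · exact hev _ hm

/-- (i) Every string of L(V) projects to two strings of L(G) with the same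
H_a-observation; (ii) conversely, any two strings of L(G) with the same
H_a-observation arise as the projections of some string of L(V). -/
theorem stmt_14 {Q E O : Type*} (T : PDFA Q E) (Ha : E → Option O) :
    (∀ sV : List (Option E × Option E), (∀ ev ∈ sV, ev ∈ twinEvents Ha) →
       (twinRun T sV).isSome →
       sV.filterMap Prod.fst ∈ T.lang ∧ sV.filterMap Prod.snd ∈ T.lang ∧
       obs Ha (sV.filterMap Prod.fst) = obs Ha (sV.filterMap Prod.snd)) ∧
    (∀ s1 ∈ T.lang, ∀ s2 ∈ T.lang, obs Ha s1 = obs Ha s2 →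
       ∃ sV : List (Option E × Option E),
         (∀ ev ∈ sV, ev ∈ twinEvents Ha) ∧ (twinRun T sV).isSome ∧
         sV.filterMap Prod.fst = s1 ∧ sV.filterMap Prod.snd = s2) := by
  constructor
  · intro sV hev hs
    rw [twinRun_eq] at hs
    have h1 : (T.run (sV.filterMap Prod.fst)).isSome := by
      cases h : T.run (sV.filterMap Prod.fst) <;> simp [h] at hs ⊢
    have h2 : (T.run (sV.filterMap Prod.snd)).isSome := by
      cases h : T.run (sV.filterMap Prod.snd) <;> simp [h] at hs ⊢
    exact ⟨h1, h2, obs_proj_eq Ha sV hev⟩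
  · intro s1 hs1 s2 hs2 hobs
    obtain ⟨sV, hev, h1, h2⟩ := interleave Ha s1 s2 hobs
    refine ⟨sV, hev, ?_, h1, h2⟩
    rw [twinRun_eq, h1, h2]
    simp only [PDFA.lang, Set.mem_setOf_eq] at hs1 hs2
    obtain ⟨p1, hp1⟩ := Option.isSome_iff_exists.mp hs1
    obtain ⟨p2, hp2⟩ := Option.isSome_iff_exists.mp hs2
    simp [hp1, hp2]
end
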